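/- Let H be a connected hypergraph, let v be a vertex and U a nonempty set of vertices. Consider the simple random walk X started at v with chosen hyperedges e(0), e(1), …, and let Y be the edge Markov chain on E with transition probabilities Q(e,f) = Σ_{w in e∩f} 1/(δ(e)·d(w)) and initial distribution λ0, where λ0(e) = 1/d(v) if v ∈ e and λ0(e) = 0 otherwise. Let E(U) = {e in E : e ∩ U ≠ ∅}. Then for every t ≥ 0, Pr[ inf{s ≥ 0 : e(s) ∩ U ≠ ∅} ≤ t ] = Pr[ inf{s ≥ 0 : Y(s) ∈ E(U)} ≤ t ]; that is, the index of the first step at which the vertex walk uses a hyperedge meeting U has the same distribution as the hitting time of E(U) by the edge chain Y started from λ0. -/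

import Mathlib

open scoped ENNReal Classical
open Finset

/-- A hypergraph: a finite nonempty family of nonempty hyperedges over a finite vertex set. -/
structure FinHypergraph (V : Type) [Fintype V] [DecidableEq V] where
  edges : Finset (Finset V)
  edges_nonempty : edges.Nonempty
  mem_nonempty : ∀ e ∈ edges, e.Nonempty

namespace FinHypergraph

variable {V : Type} [Fintype V] [DecidableEq V]

/-- The degree `d(v)` of a vertex: the number of hyperedges containing it. -/
def degV (H : FinHypergraph V) (v : V) : ℕ := (H.edges.filter (fun e => v ∈ e)).card

/-- The rank of a hypergraph: the maximum cardinality of a hyperedge. -/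
def rank (H : FinHypergraph V) : ℕ := H.edges.sup Finset.card

/-- Connectivity: every vertex lies in some hyperedge, and any two vertices are joined
by a hyperpath (consecutive vertices share a hyperedge). -/
def Connected (H : FinHypergraph V) : Prop :=
  (∀ v : V, ∃ e ∈ H.edges, v ∈ e) ∧
    ∀ u v : V, Relation.ReflTransGen (fun a b => ∃ e ∈ H.edges, a ∈ e ∧ b ∈ e) u v

/-- One step of the simple random walk: from vertex `v`, the probability of choosing
hyperedge `p.1` (uniform among the edges containing `v`) and then vertex `p.2`
(uniform inside `p.1`). -/
noncomputable def stepProb (H : FinHypergraph V) (v : V) (p : Finset V × V) : ℝ≥0∞ :=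
  if p.1 ∈ H.edges ∧ v ∈ p.1 ∧ p.2 ∈ p.1 then
    ((H.degV v : ℝ≥0∞) * (p.1.card : ℝ≥0∞))⁻¹ else 0

/-- The vertex visited at time `s` along a trajectory `w` (a list of (edge, next vertex)
pairs) started at `v`; `vAt v w 0 = v`. -/
def vAt (v : V) {t : ℕ} (w : Fin t → Finset V × V) : ℕ → V
  | 0 => v
  | s + 1 => if h : s < t then (w ⟨s, h⟩).2 else v

/-- Probability of a finite trajectory of the simple random walk started at `v`. -/
noncomputable def trajProb (H : FinHypergraph V) (v : V) {t : ℕ}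
    (w : Fin t → Finset V × V) : ℝ≥0∞ :=
  ∏ s : Fin t, H.stepProb (vAt v w s) (w s)

/-- Probability that the length-`t` trajectory of the walk started at `v` satisfies `A`. -/
noncomputable def pr (H : FinHypergraph V) (v : V) (t : ℕ)
    (A : (Fin t → Finset V × V) → Prop) : ℝ≥0∞ :=
  ∑ w : Fin t → Finset V × V, if A w then H.trajProb v w else 0

/-- Expected cover time from `v`: `E[max_u T_v^u] = ∑_t Pr[some vertex unvisited by time t]`. -/
noncomputable def coverFrom (H : FinHypergraph V) (v : V) : ℝ≥0∞ :=
  ∑' t : ℕ, H.pr v t (fun w => ∃ u : V, ∀ s : ℕ, s ≤ t → vAt v w s ≠ u)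

/-- The cover time `C` of the hypergraph. -/
noncomputable def coverTime (H : FinHypergraph V) : ℝ≥0∞ := ⨆ v : V, H.coverFrom v

/-- Expected radio cover time from `v`: `u` has heard the walk by time `t` iff `u = X(0)`
or `u ∈ e(s)` for some `s < t`. -/
noncomputable def radioCoverFrom (H : FinHypergraph V) (v : V) : ℝ≥0∞ :=
  ∑' t : ℕ, H.pr v t (fun w => ∃ u : V, u ≠ v ∧ ∀ s : Fin t, u ∉ (w s).1)

/-- The radio cover time `C̃` of the hypergraph. -/
noncomputable def radioCoverTime (H : FinHypergraph V) : ℝ≥0∞ := ⨆ v : V, H.radioCoverFrom v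

/-- The hitting time `h(v,u) = E[inf{t : X(t) = u}]`. -/
noncomputable def hitting (H : FinHypergraph V) (v u : V) : ℝ≥0∞ :=
  ∑' t : ℕ, H.pr v t (fun w => ∀ s : ℕ, s ≤ t → vAt v w s ≠ u)

/-- The radio hitting time `h̃(v,u)`: expected first time by which `u` has heard the walk. -/
noncomputable def radioHitting (H : FinHypergraph V) (v u : V) : ℝ≥0∞ :=
  ∑' t : ℕ, H.pr v t (fun w => u ≠ v ∧ ∀ s : Fin t, u ∉ (w s).1)

/-- The maximum hitting time `h_max`. -/
noncomputable def maxHitting (H : FinHypergraph V) : ℝ≥0∞ := ⨆ v : V, ⨆ u : V, H.hitting v u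

/-- The maximum radio hitting time `h̃_max`. -/
noncomputable def maxRadioHitting (H : FinHypergraph V) : ℝ≥0∞ :=
  ⨆ v : V, ⨆ u : V, H.radioHitting v u

end FinHypergraph

namespace FinHypergraph

variable {V : Type} [Fintype V] [DecidableEq V]

/-- The transition matrix `Q` of the edge chain:
`Q(e,f) = ∑_{w ∈ e ∩ f} 1/(δ(e)·d(w))` for hyperedges `e, f` of `H`. -/
noncomputable def Qmat (H : FinHypergraph V) (e f : Finset V) : ℝ≥0∞ :=
  if e ∈ H.edges ∧ f ∈ H.edges then
    ∑ w ∈ e ∩ f, ((e.card : ℝ≥0∞) * (H.degV w : ℝ≥0∞))⁻¹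
  else 0

/-- The initial distribution `λ0` of the edge chain for the walk started at `v`:
`λ0(e) = 1/d(v)` if `v ∈ e`, and `0` otherwise. -/
noncomputable def lambda0 (H : FinHypergraph V) (v : V) (e : Finset V) : ℝ≥0∞ :=
  if e ∈ H.edges ∧ v ∈ e then (H.degV v : ℝ≥0∞)⁻¹ else 0

/-- Probability that the trajectory `(Y(0), …, Y(t))` of the edge chain `Y` with initial
distribution `λ0` satisfies `A`. -/
noncomputable def edgePr (H : FinHypergraph V) (v : V) (t : ℕ)
    (A : (Fin (t + 1) → Finset V) → Prop) : ℝ≥0∞ :=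
  ∑ y : Fin (t + 1) → Finset V,
    if A y then
      H.lambda0 v (y 0) * ∏ s : Fin t, H.Qmat (y s.castSucc) (y s.succ)
    else 0

end FinHypergraph


namespace FinHypergraph

variable {V : Type} [Fintype V] [DecidableEq V]

private lemma nat_inv_shuffle (a b c : ℕ) :
    (((a : ℝ≥0∞)) * b)⁻¹ * (c : ℝ≥0∞)⁻¹ = (a : ℝ≥0∞)⁻¹ * (((b : ℝ≥0∞)) * c)⁻¹ := by
  rw [ENNReal.mul_inv (Or.inr (by simp)) (Or.inl (by simp)),
      ENNReal.mul_inv (Or.inr (by simp)) (Or.inl (by simp)), mul_assoc]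

lemma step_sum_one (H : FinHypergraph V) (u : V) (e : Finset V) :
    ∑ z : V, H.stepProb u (e, z) = H.lambda0 u e := by
  unfold stepProb lambda0
  by_cases h : e ∈ H.edges ∧ u ∈ e
  · have hcard : (e.card : ℝ≥0∞) ≠ 0 := by
      exact_mod_cast Finset.card_ne_zero.mpr ⟨u, h.2⟩
    simp only [h.1, h.2, true_and, if_true]
    rw [Finset.sum_ite_mem, Finset.univ_inter, Finset.sum_const, nsmul_eq_mul,
      ENNReal.mul_inv (Or.inr (by simp)) (Or.inl (by simp)),
      ← mul_assoc, mul_comm (e.card : ℝ≥0∞), mul_assoc,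
      ENNReal.mul_inv_cancel hcard (by simp), mul_one]
  · have h' : ∀ z : V, ¬ (e ∈ H.edges ∧ u ∈ e ∧ z ∈ e) := fun z hz => h ⟨hz.1, hz.2.1⟩
    simp [h, h']

lemma step_sum (H : FinHypergraph V) (u : V) (e f : Finset V) :
    ∑ z : V, H.stepProb u (e, z) * H.lambda0 z f = H.lambda0 u e * H.Qmat e f := by
  unfold stepProb lambda0 Qmat
  by_cases h : e ∈ H.edges ∧ u ∈ e
  · by_cases hf : f ∈ H.edges
    · rw [show (fun z => (if e ∈ H.edges ∧ u ∈ e ∧ z ∈ e then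
          ((H.degV u : ℝ≥0∞) * e.card)⁻¹ else 0) *
          (if f ∈ H.edges ∧ z ∈ f then (H.degV z : ℝ≥0∞)⁻¹ else 0)) =
          (fun z => if z ∈ e ∩ f then
            ((H.degV u : ℝ≥0∞) * e.card)⁻¹ * (H.degV z : ℝ≥0∞)⁻¹ else 0) from by
        funext z
        by_cases hz : z ∈ e ∩ f
        · simp only [Finset.mem_inter] at hz
          simp [hz.1, hz.2, h.1, h.2, hf]
        · simp only [Finset.mem_inter, not_and] at hz
          by_cases hze : z ∈ e
          · simp [hze, hz hze, Finset.mem_inter]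
          · simp [hze, Finset.mem_inter]]
      rw [Finset.sum_ite_mem, Finset.univ_inter, if_pos h, if_pos ⟨h.1, hf⟩,
        Finset.mul_sum]
      exact Finset.sum_congr rfl fun z _ => nat_inv_shuffle _ _ _
    · have h1 : ∀ z : V, ¬ (f ∈ H.edges ∧ z ∈ f) := fun z hz => hf hz.1
      have h2 : ¬ (e ∈ H.edges ∧ f ∈ H.edges) := fun hz => hf hz.2
      simp [h1, h2]
  · have h' : ∀ z : V, ¬ (e ∈ H.edges ∧ u ∈ e ∧ z ∈ e) := fun z hz => h ⟨hz.1, hz.2.1⟩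
    simp [h, h']

lemma chain_sum (H : FinHypergraph V) :
    ∀ (n : ℕ) (u : V) (y : Fin (n + 1) → Finset V),
      (∑ x : Fin (n + 1) → V, H.stepProb u (y 0, x 0) *
          ∏ s : Fin n, H.stepProb (x s.castSucc) (y s.succ, x s.succ)) =
        H.lambda0 u (y 0) * ∏ s : Fin n, H.Qmat (y s.castSucc) (y s.succ) := by
  intro n
  induction n with
  | zero =>
    intro u y
    simp only [Finset.univ_eq_empty, Finset.prod_empty, mul_one]
    rw [← H.step_sum_one u (y 0)]
    exact Fintype.sum_equiv (Equiv.funUnique (Fin 1) V) _ _ (fun x => rfl)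
  | succ n ih =>
    intro u y
    rw [← Equiv.sum_comp (Fin.consEquiv (fun _ : Fin (n + 2) => V))]
    rw [Fintype.sum_prod_type]
    simp only [Fin.consEquiv_apply]
    have hstep : ∀ z : V,
        (∑ x' : Fin (n + 1) → V,
          H.stepProb u (y 0, (Fin.cons z x' : Fin (n+2) → V) 0) *
          ∏ s : Fin (n + 1), H.stepProb ((Fin.cons z x' : Fin (n+2) → V) s.castSucc)
            (y s.succ, (Fin.cons z x' : Fin (n+2) → V) s.succ)) =
        H.stepProb u (y 0, z) *
          (H.lambda0 z (y 1) *
            ∏ s : Fin n, H.Qmat (y s.castSucc.succ) (y s.succ.succ)) := by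
      intro z
      have hprod : ∀ x' : Fin (n + 1) → V,
          (∏ s : Fin (n + 1), H.stepProb ((Fin.cons z x' : Fin (n+2) → V) s.castSucc)
            (y s.succ, (Fin.cons z x' : Fin (n+2) → V) s.succ)) =
          H.stepProb z ((y ∘ Fin.succ) 0, x' 0) *
            ∏ s : Fin n, H.stepProb (x' s.castSucc)
              ((y ∘ Fin.succ) s.succ, x' s.succ) := by
        intro x'
        rw [Fin.prod_univ_succ]
        refine congrArg₂ (· * ·) (by simp) (Finset.prod_congr rfl fun s _ => ?_)
        rw [← Fin.succ_castSucc, Fin.cons_succ, Fin.cons_succ]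
        rfl
      calc (∑ x' : Fin (n + 1) → V,
            H.stepProb u (y 0, (Fin.cons z x' : Fin (n+2) → V) 0) *
            ∏ s : Fin (n + 1), H.stepProb ((Fin.cons z x' : Fin (n+2) → V) s.castSucc)
              (y s.succ, (Fin.cons z x' : Fin (n+2) → V) s.succ))
          = H.stepProb u (y 0, z) * ∑ x' : Fin (n + 1) → V,
              H.stepProb z ((y ∘ Fin.succ) 0, x' 0) *
              ∏ s : Fin n, H.stepProb (x' s.castSucc)
                ((y ∘ Fin.succ) s.succ, x' s.succ) := by
            rw [Finset.mul_sum]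
            exact Finset.sum_congr rfl fun x' _ => by
              rw [hprod x', Fin.cons_zero]
        _ = _ := by
            rw [ih z (y ∘ Fin.succ)]
            rfl
    rw [Finset.sum_congr rfl fun z _ => hstep z]
    have : (∑ z : V, H.stepProb u (y 0, z) *
        (H.lambda0 z (y 1) * ∏ s : Fin n, H.Qmat (y s.castSucc.succ) (y s.succ.succ))) =
        (∑ z : V, H.stepProb u (y 0, z) * H.lambda0 z (y 1)) *
          ∏ s : Fin n, H.Qmat (y s.castSucc.succ) (y s.succ.succ) := by
      rw [Finset.sum_mul]
      exact Finset.sum_congr rfl fun z _ => (mul_assoc _ _ _).symm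
    rw [this, H.step_sum u (y 0) (y 1), Fin.prod_univ_succ, ← mul_assoc]
    have h1 : H.Qmat (y (0 : Fin (n + 1)).castSucc) (y (0 : Fin (n + 1)).succ) =
        H.Qmat (y 0) (y 1) := by
      rw [Fin.castSucc_zero, Fin.succ_zero_eq_one]
    have h2 : (∏ s : Fin n, H.Qmat (y s.succ.castSucc) (y s.succ.succ)) =
        ∏ s : Fin n, H.Qmat (y s.castSucc.succ) (y s.succ.succ) := by
      apply Finset.prod_congr rfl
      intro s _
      rw [← Fin.succ_castSucc]
    rw [h1, h2]

lemma trajProb_pair (H : FinHypergraph V) (v : V) (n : ℕ)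
    (y : Fin (n + 1) → Finset V) (x : Fin (n + 1) → V) :
    H.trajProb v (fun s => (y s, x s)) =
      H.stepProb v (y 0, x 0) *
        ∏ s : Fin n, H.stepProb (x s.castSucc) (y s.succ, x s.succ) := by
  unfold trajProb
  rw [Fin.prod_univ_succ]
  congr 1
  apply Finset.prod_congr rfl
  intro s _
  have hv : vAt v (fun s => (y s, x s)) ((s.succ : Fin (n+1)) : ℕ) = x s.castSucc := by
    show vAt v (fun s => (y s, x s)) (s.val + 1) = x s.castSucc
    simp only [vAt]
    rw [dif_pos (by omega : s.val < n + 1)]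
    rfl
  rw [hv]

end FinHypergraph

/-- For a connected hypergraph `H`, a start vertex `v` and a nonempty
set `U` of vertices, the first step index at which the vertex walk uses a hyperedge
meeting `U` has the same distribution as the hitting time of
`E(U) = {e : e ∩ U ≠ ∅}` by the edge chain `Y` started from `λ0`: for every `t ≥ 0`,
`Pr[inf{s : e(s) ∩ U ≠ ∅} ≤ t] = Pr[inf{s : Y(s) ∈ E(U)} ≤ t]`. -/
theorem vertexWalk_edgeChain_radio_distribution
    (V : Type) [Fintype V] [DecidableEq V] (H : FinHypergraph V) (hconn : H.Connected)
    (v : V) (U : Finset V) (hU : U.Nonempty) (t : ℕ) :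
    H.pr v (t + 1) (fun w => ∃ s : Fin (t + 1), ((w s).1 ∩ U).Nonempty) =
      H.edgePr v t (fun y => ∃ s : Fin (t + 1), (y s ∩ U).Nonempty) := by
  rw [FinHypergraph.pr, FinHypergraph.edgePr,
    ← Equiv.sum_comp (Equiv.arrowProdEquivProdArrow (Fin (t + 1)) (fun _ => Finset V) (fun _ => V)).symm,
    Fintype.sum_prod_type]
  apply Finset.sum_congr rfl
  intro y _
  by_cases hA : ∃ s : Fin (t + 1), (y s ∩ U).Nonempty
  · have hc : ∀ x : Fin (t + 1) → V,
        (∃ s : Fin (t + 1),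
          (((Equiv.arrowProdEquivProdArrow (Fin (t + 1)) (fun _ => Finset V) (fun _ => V)).symm (y, x) s).1
            ∩ U).Nonempty) := fun x => hA
    rw [if_pos hA, ← H.chain_sum t v y]
    apply Finset.sum_congr rfl
    intro x _
    rw [if_pos (hc x)]
    exact H.trajProb_pair v t y x
  · rw [if_neg hA]
    apply Finset.sum_eq_zero
    intro x _
    rw [if_neg]
    exact hA
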